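/- Fix λ > 0, and for each n let M(n) be a binomial random variable with parameters n(n−1)/2 and λ/n. Then the sequence 2M(n)/n satisfies a large deviation principle on [0,∞) with speed n and good rate function j(x) = (λ − x + x log(x/λ))/2 (with the convention 0 log 0 = 0, so j(0) = λ/2): j is lower semicontinuous with compact level sets, and for every Borel set B ⊆ [0,∞), −inf_{x ∈ B°} j(x) ≤ liminf_{n→∞} (1/n) log P(2M(n)/n ∈ B) ≤ limsup_{n→∞} (1/n) log P(2M(n)/n ∈ B) ≤ −inf_{x ∈ cl(B)} j(x), where B° and cl(B) denote the interior and closure of B in [0,∞). -/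

import Mathlib

set_option maxHeartbeats 1000000

open Filter Topology
open scoped Classical

/-- Probability that `2 M(n) / n ∈ B`, where `M(n)` is binomial with parameters
`n(n−1)/2` and `λ/n`. -/
noncomputable def binomProb (lam : ℝ) (n : ℕ) (B : Set NNReal) : ℝ :=
  ∑ k ∈ Finset.range (n * (n - 1) / 2 + 1),
    if ((2 * k : NNReal) / (n : NNReal)) ∈ B then
      (Nat.choose (n * (n - 1) / 2) k : ℝ) * (lam / n) ^ k *
        (1 - lam / n) ^ (n * (n - 1) / 2 - k)
    else 0

/-- The rate function `j(x) = (λ − x + x log(x/λ))/2` (with `j(0) = λ/2`, as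
`Real.log 0 = 0`). -/
noncomputable def rateJ (lam : ℝ) (x : NNReal) : ℝ :=
  (lam - x + x * Real.log (x / lam)) / 2

/-- `(1/n) log x`, interpreted as `−∞` when `x` is not positive. -/
noncomputable def elog (x : ℝ) (n : ℕ) : EReal :=
  if 0 < x then ((Real.log x / n : ℝ) : EReal) else ⊥


lemma aux_pow_le_factorial_mul_exp (k : ℕ) : (k:ℝ)^k ≤ (k.factorial : ℝ) * Real.exp k := by
  have h := Real.pow_div_factorial_le_exp (x := (k:ℝ)) (Nat.cast_nonneg k) k
  have hk : (0:ℝ) < k.factorial := by exact_mod_cast k.factorial_pos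
  rw [div_le_iff₀ hk] at h
  linarith [h]

lemma aux_exp_one_le (k : ℕ) (hk : 1 ≤ k) :
    Real.exp 1 * (k:ℝ)^(k+1) ≤ ((k:ℝ)+1)^(k+1) := by
  have hk0 : (0:ℝ) < k := by exact_mod_cast hk
  have h1 : Real.exp (1/((k:ℝ)+1)) ≤ ((k:ℝ)+1)/k := by
    have h3 : (k:ℝ)/((k:ℝ)+1) ≤ (Real.exp (1/((k:ℝ)+1)))⁻¹ := by
      rw [← Real.exp_neg]
      have h := Real.add_one_le_exp (-(1/((k:ℝ)+1)))
      have he : -(1/((k:ℝ)+1)) + 1 = (k:ℝ)/((k:ℝ)+1) := by field_simp; ring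
      linarith [he ▸ h]
    have h5 := mul_le_mul_of_nonneg_right h3 (Real.exp_pos (1/((k:ℝ)+1))).le
    rw [inv_mul_cancel₀ (Real.exp_pos _).ne'] at h5
    rw [le_div_iff₀ hk0]
    have hke : (0:ℝ) < (k:ℝ)+1 := by positivity
    have h6 : (k:ℝ) * Real.exp (1/((k:ℝ)+1)) ≤ (k:ℝ)+1 := by
      have h7 := mul_le_mul_of_nonneg_right h5 hke.le
      rw [one_mul] at h7
      calc (k:ℝ) * Real.exp (1/((k:ℝ)+1))
          = ((k:ℝ)/((k:ℝ)+1) * Real.exp (1/((k:ℝ)+1))) * ((k:ℝ)+1) := by field_simp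
        _ ≤ (k:ℝ)+1 := h7
    linarith
  have h4 : Real.exp 1 ≤ (((k:ℝ)+1)/k)^(k+1) := by
    have he : Real.exp 1 = (Real.exp (1/((k:ℝ)+1)))^(k+1) := by
      rw [← Real.exp_nat_mul]
      congr 1
      push_cast
      field_simp
    rw [he]
    exact pow_le_pow_left₀ (Real.exp_nonneg _) h1 (k+1)
  calc Real.exp 1 * (k:ℝ)^(k+1) ≤ (((k:ℝ)+1)/k)^(k+1) * (k:ℝ)^(k+1) :=
        mul_le_mul_of_nonneg_right h4 (by positivity)
    _ = ((k:ℝ)+1)^(k+1) := by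
        rw [div_pow, div_mul_cancel₀]
        positivity

lemma aux_factorial_le (k : ℕ) (hk : 1 ≤ k) :
    (k.factorial : ℝ) * Real.exp k ≤ Real.exp 1 * (k:ℝ)^(k+1) := by
  induction k, hk using Nat.le_induction with
  | base => simp [Nat.factorial]
  | succ k hk ih =>
      have hk0 : (0:ℝ) < k := by exact_mod_cast hk
      have step := aux_exp_one_le k hk
      have heq : ((k+1).factorial : ℝ) * Real.exp ((k:ℝ)+1) = ((k:ℝ)+1) * Real.exp 1 * ((k.factorial:ℝ) * Real.exp k) := by
        rw [Nat.factorial_succ, Real.exp_add]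
        push_cast
        ring
      push_cast
      rw [heq]
      calc ((k:ℝ)+1) * Real.exp 1 * ((k.factorial:ℝ) * Real.exp k)
          ≤ ((k:ℝ)+1) * Real.exp 1 * (Real.exp 1 * (k:ℝ)^(k+1)) := by
            exact mul_le_mul_of_nonneg_left ih (by positivity)
        _ = ((k:ℝ)+1) * (Real.exp 1 * (k:ℝ)^(k+1)) * Real.exp 1 := by ring
        _ ≤ ((k:ℝ)+1) * ((k:ℝ)+1)^(k+1) * Real.exp 1 := by
            have := mul_le_mul_of_nonneg_left step (le_of_lt (by positivity : (0:ℝ) < (k:ℝ)+1))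
            exact mul_le_mul_of_nonneg_right this (Real.exp_nonneg 1)
        _ = Real.exp 1 * ((k:ℝ)+1)^(k+1+1) := by ring

lemma aux_exp_le_one_sub {p : ℝ} (h0 : 0 ≤ p) (h1 : p < 1) :
    Real.exp (-(p/(1-p))) ≤ 1 - p := by
  have hp : (0:ℝ) < 1 - p := by linarith
  have h := Real.add_one_le_exp (p/(1-p))
  have he : p/(1-p) + 1 = 1/(1-p) := by field_simp; ring
  rw [he] at h
  rw [Real.exp_neg]
  rw [inv_le_comm₀ (Real.exp_pos _) hp] at *
  · calc (1-p)⁻¹ = 1/(1-p) := (one_div _).symm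
      _ ≤ Real.exp (p/(1-p)) := h

lemma aux_sum_range_id (k : ℕ) : (∑ i ∈ Finset.range k, (i:ℝ)) = k * ((k:ℝ)-1)/2 := by
  induction k with
  | zero => simp
  | succ k ih => rw [Finset.sum_range_succ, ih]; push_cast; ring

lemma aux_descFactorial_le {N k : ℕ} (hN : 1 ≤ N) (hk : k ≤ N) :
    (N.descFactorial k : ℝ) ≤ (N:ℝ)^k * Real.exp (-(k * ((k:ℝ)-1)/(2*N))) := by
  have hN0 : (0:ℝ) < N := by exact_mod_cast hN
  rw [Nat.descFactorial_eq_prod_range]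
  push_cast
  have hcast : ∀ i ∈ Finset.range k, ((N - i : ℕ) : ℝ) = (N:ℝ) - i := by
    intro i hi
    have : i ≤ N := le_trans (Nat.le_of_lt (Finset.mem_range.mp hi)) hk
    push_cast [Nat.cast_sub this]
    ring
  rw [Finset.prod_congr rfl hcast]
  have hle : ∀ i ∈ Finset.range k, (N:ℝ) - i ≤ (N:ℝ) * Real.exp (-(i/(N:ℝ))) := by
    intro i hi
    have h := Real.add_one_le_exp (-((i:ℝ)/N))
    calc (N:ℝ) - i = (N:ℝ) * (-((i:ℝ)/N) + 1) := by field_simp; ring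
      _ ≤ (N:ℝ) * Real.exp (-((i:ℝ)/N)) := mul_le_mul_of_nonneg_left h hN0.le
  calc (∏ i ∈ Finset.range k, ((N:ℝ) - i))
      ≤ ∏ i ∈ Finset.range k, (N:ℝ) * Real.exp (-(i/(N:ℝ))) := by
        apply Finset.prod_le_prod _ hle
        intro i hi
        have : (i:ℝ) ≤ N := by
          have : i ≤ N := le_trans (Nat.le_of_lt (Finset.mem_range.mp hi)) hk
          exact_mod_cast this
        linarith
    _ = (N:ℝ)^k * Real.exp (-(k * ((k:ℝ)-1)/(2*N))) := by
        rw [Finset.prod_mul_distrib, Finset.prod_const, ← Real.exp_sum, Finset.card_range]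
        congr 1
        have : ∑ i ∈ Finset.range k, -((i:ℝ)/N) = -((∑ i ∈ Finset.range k, (i:ℝ))/N) := by
          rw [Finset.sum_div, ← Finset.sum_neg_distrib]
        rw [this, aux_sum_range_id]
        ring



lemma aux_Ncast (n : ℕ) (hn : 1 ≤ n) : ((n*(n-1)/2 : ℕ) : ℝ) = (n:ℝ) * ((n:ℝ)-1)/2 := by
  have h2 : 2 ∣ n*(n-1) := by
    have := Nat.even_mul_succ_self (n-1)
    rw [Nat.sub_add_cancel hn] at this
    exact (by rwa [Nat.mul_comm] : Even (n*(n-1))).two_dvd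
  rw [Nat.cast_div h2 (by norm_num : ((2:ℕ):ℝ) ≠ 0)]
  push_cast [Nat.cast_sub hn]
  ring

lemma aux_coe_x (n k : ℕ) : ((((2 * k : NNReal) / (n : NNReal)) : NNReal) : ℝ) = 2*(k:ℝ)/(n:ℝ) := by
  push_cast
  rfl

lemma aux_nrate (lam : ℝ) (hlam : 0 < lam) (n k : ℕ) (hn : 1 ≤ n) :
    (n:ℝ) * rateJ lam ((2 * k : NNReal) / (n : NNReal))
      = (n:ℝ)*lam/2 - k + k * Real.log (2*k/((n:ℝ)*lam)) := by
  have hn0 : ((n:ℝ)) ≠ 0 := by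
    have : (0:ℝ) < n := by exact_mod_cast hn
    exact this.ne'
  have hx := aux_coe_x n k
  have hlog : Real.log ((((2 * k : NNReal) / (n : NNReal) : NNReal)):ℝ) - Real.log lam
      = Real.log (2*(k:ℝ)/(n:ℝ)) - Real.log lam := by rw [hx]
  unfold rateJ
  rw [hx]
  have hdd : (2*(k:ℝ)/(n:ℝ))/lam = 2*(k:ℝ)/((n:ℝ)*lam) := by
    rw [div_div]
  rw [hdd]
  field_simp



lemma aux_key (lam nR kR NR : ℝ) (hlam : 0 < lam) (hn : 2 ≤ nR) (hk : 1 ≤ kR)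
    (hN : 0 < NR) (h2N : 2*NR = nR*(nR-1)) :
    lam/nR*kR - kR*(kR-1)/(2*NR) ≤ lam^2 + lam := by
  have hn0 : (0:ℝ) < nR := by linarith
  rcases le_or_gt kR (lam*(nR-1)+1) with hc | hc
  · have hpk : lam/nR*kR ≤ lam^2 + lam := by
      rw [div_mul_eq_mul_div, div_le_iff₀ hn0]
      nlinarith [hlam, hn, hc, hk]
    have hnn2 : 0 ≤ kR*(kR-1)/(2*NR) := by
      apply div_nonneg _ (by positivity)
      nlinarith [hk]
    linarith
  · have hple : lam/nR*kR ≤ kR*(kR-1)/(2*NR) := by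
      rw [div_mul_eq_mul_div, div_le_div_iff₀ hn0 (by positivity)]
      have hfac : 0 ≤ kR * (kR - 1 - lam*(nR-1)) := by
        apply mul_nonneg (by linarith)
        linarith
      rw [h2N]
      nlinarith [mul_nonneg hn0.le hfac]
    nlinarith [hple, hlam]

lemma term_upper (lam : ℝ) (hlam : 0 < lam) (n k : ℕ) (hn2 : 2 ≤ n) (hnl : lam ≤ (n:ℝ))
    (hk : k ≤ n*(n-1)/2) :
    (Nat.choose (n*(n-1)/2) k : ℝ) * (lam/n)^k * (1 - lam/n)^(n*(n-1)/2 - k)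
      ≤ Real.exp (lam^2 + 2*lam - (n:ℝ) * rateJ lam ((2 * k : NNReal) / (n : NNReal))) := by
  set N := n*(n-1)/2 with hNdef
  have hn1 : 1 ≤ n := le_trans (by norm_num) hn2
  have hnR : (2:ℝ) ≤ (n:ℝ) := by exact_mod_cast hn2
  have hn0 : (0:ℝ) < n := by linarith
  set p : ℝ := lam/n with hpdef
  have hp0 : 0 < p := by positivity
  have hp1 : p ≤ 1 := by rw [hpdef, div_le_one hn0]; exact hnl
  have h1p : 0 ≤ 1 - p := by linarith
  have hexp1p : 1 - p ≤ Real.exp (-p) := by linarith [Real.add_one_le_exp (-p)]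
  have hNR : (N:ℝ) = (n:ℝ) * ((n:ℝ)-1)/2 := aux_Ncast n hn1
  have hNk : ((N - k : ℕ):ℝ) = (N:ℝ) - (k:ℝ) := by
    rw [Nat.cast_sub hk]
  have hrate := aux_nrate lam hlam n k hn1
  have hA3 : (1-p)^(N-k) ≤ Real.exp (-p*((N:ℝ)-(k:ℝ))) := by
    calc (1-p)^(N-k) ≤ (Real.exp (-p))^(N-k) := pow_le_pow_left₀ h1p hexp1p _
      _ = Real.exp (-p * ((N-k:ℕ):ℝ)) := by rw [← Real.exp_nat_mul]; congr 1; ring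
      _ = Real.exp (-p*((N:ℝ)-(k:ℝ))) := by rw [hNk]
  have hpN : p * (N:ℝ) = lam * ((n:ℝ)-1)/2 := by
    rw [hNR, hpdef]
    field_simp
  -- case k = 0
  rcases Nat.eq_zero_or_pos k with hk0 | hk1
  · subst hk0
    have hL : (Nat.choose N 0 : ℝ) * p^0 * (1-p)^(N-0) = (1-p)^(N-0) := by norm_num
    rw [hL]
    refine hA3.trans (Real.exp_le_exp.mpr ?_)
    rw [hrate]
    push_cast
    nlinarith [hlam, hnR, hpN, hn0]
  · -- case 1 ≤ k
    have hkR : (1:ℝ) ≤ (k:ℝ) := by exact_mod_cast hk1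
    have hkR0 : (0:ℝ) < (k:ℝ) := by linarith
    have hN1 : 1 ≤ N := le_trans hk1 hk
    have hNpos : (0:ℝ) < (N:ℝ) := by exact_mod_cast hN1
    have hkf : (0:ℝ) < (k.factorial : ℝ) := by exact_mod_cast k.factorial_pos
    have hkk : (0:ℝ) < (k:ℝ)^k := by positivity
    have hchoose : (N.choose k : ℝ) = (N.descFactorial k : ℝ) / k.factorial := by
      rw [Nat.descFactorial_eq_factorial_mul_choose]
      push_cast
      field_simp
    have hA2 : (1:ℝ)/(k.factorial:ℝ) ≤ Real.exp k / (k:ℝ)^k := by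
      rw [div_le_div_iff₀ hkf hkk]
      have := aux_pow_le_factorial_mul_exp k
      nlinarith [this]
    set Q : ℝ := ((n:ℝ)*lam/2)/(k:ℝ) with hQdef
    have hQpos : 0 < Q := by positivity
    have hNp : (N:ℝ)*p ≤ (n:ℝ)*lam/2 := by
      rw [mul_comm ((N:ℝ)) p, hpN]
      nlinarith [hlam, hn0]
    have hNp0 : 0 ≤ (N:ℝ)*p := by positivity
    have hE : ((N:ℝ)*p)^k / (k:ℝ)^k ≤ Real.exp ((k:ℝ) * Real.log Q) := by
      calc ((N:ℝ)*p)^k / (k:ℝ)^k ≤ ((n:ℝ)*lam/2)^k / (k:ℝ)^k := by gcongr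
        _ = Q^k := by rw [hQdef]; ring
        _ = Real.exp ((k:ℝ) * Real.log Q) := by
            rw [← Real.exp_log hQpos, ← Real.exp_nat_mul, Real.exp_log hQpos]
    have main : (Nat.choose N k : ℝ) * p^k * (1-p)^(N-k)
        ≤ Real.exp ((k:ℝ) * Real.log Q + ((k:ℝ) - (k:ℝ)*((k:ℝ)-1)/(2*(N:ℝ)) - p*((N:ℝ)-(k:ℝ)))) := by
      have hdF := aux_descFactorial_le hN1 hk
      calc (Nat.choose N k : ℝ) * p^k * (1-p)^(N-k)
          = (N.descFactorial k : ℝ) * p^k * (1-p)^(N-k) * (1/(k.factorial:ℝ)) := by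
            rw [hchoose]; ring
        _ ≤ ((N:ℝ)^k * Real.exp (-((k:ℝ) * ((k:ℝ)-1)/(2*(N:ℝ))))) * p^k
              * Real.exp (-p*((N:ℝ)-(k:ℝ))) * (Real.exp k / (k:ℝ)^k) := by
            have t1 : (N.descFactorial k : ℝ) * p^k * (1-p)^(N-k)
                ≤ ((N:ℝ)^k * Real.exp (-((k:ℝ) * ((k:ℝ)-1)/(2*(N:ℝ))))) * p^k
                  * Real.exp (-p*((N:ℝ)-(k:ℝ))) := by
              have h1 : (0:ℝ) ≤ p^k := by positivity
              have h2 : (0:ℝ) ≤ (1-p)^(N-k) := by positivity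
              calc (N.descFactorial k : ℝ) * p^k * (1-p)^(N-k)
                  ≤ ((N:ℝ)^k * Real.exp (-((k:ℝ) * ((k:ℝ)-1)/(2*(N:ℝ))))) * p^k * (1-p)^(N-k) := by
                    apply mul_le_mul_of_nonneg_right _ h2
                    exact mul_le_mul_of_nonneg_right hdF h1
                _ ≤ _ := by
                    apply mul_le_mul_of_nonneg_left hA3
                    positivity
            have hnn : (0:ℝ) ≤ (N.descFactorial k : ℝ) * p^k * (1-p)^(N-k) := by positivity
            calc (N.descFactorial k : ℝ) * p^k * (1-p)^(N-k) * (1/(k.factorial:ℝ))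
                ≤ (N.descFactorial k : ℝ) * p^k * (1-p)^(N-k) * (Real.exp k / (k:ℝ)^k) := by
                  exact mul_le_mul_of_nonneg_left hA2 hnn
              _ ≤ _ := by
                  apply mul_le_mul_of_nonneg_right t1
                  positivity
        _ = ((N:ℝ)*p)^k / (k:ℝ)^k
              * (Real.exp (-((k:ℝ) * ((k:ℝ)-1)/(2*(N:ℝ)))) * Real.exp (-p*((N:ℝ)-(k:ℝ))) * Real.exp k) := by
            rw [mul_pow]; ring
        _ ≤ Real.exp ((k:ℝ) * Real.log Q)
              * (Real.exp (-((k:ℝ) * ((k:ℝ)-1)/(2*(N:ℝ)))) * Real.exp (-p*((N:ℝ)-(k:ℝ))) * Real.exp k) := by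
            apply mul_le_mul_of_nonneg_right hE
            positivity
        _ = Real.exp ((k:ℝ) * Real.log Q + ((k:ℝ) - (k:ℝ)*((k:ℝ)-1)/(2*(N:ℝ)) - p*((N:ℝ)-(k:ℝ)))) := by
            rw [← Real.exp_add, ← Real.exp_add, ← Real.exp_add]
            congr 1
            ring
    refine main.trans (Real.exp_le_exp.mpr ?_)
    rw [hrate]
    have hQlog : Real.log Q = - Real.log (2*(k:ℝ)/((n:ℝ)*lam)) := by
      rw [← Real.log_inv]
      congr 1
      rw [hQdef, inv_div, div_div]
    rw [hQlog]
    have h2N : 2*(N:ℝ) = (n:ℝ)*((n:ℝ)-1) := by rw [hNR]; ring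
    have key : p*(k:ℝ) - (k:ℝ)*((k:ℝ)-1)/(2*(N:ℝ)) ≤ lam^2 + lam := by
      have := aux_key lam (n:ℝ) (k:ℝ) (N:ℝ) hlam hnR hkR hNpos h2N
      rw [hpdef]
      linarith [this]
    have hexpand : p*((N:ℝ)-(k:ℝ)) = p*(N:ℝ) - p*(k:ℝ) := by ring
    rw [hexpand]
    linarith [key, hpN, hlam]



lemma term_lower (lam : ℝ) (hlam : 0 < lam) (n k : ℕ) (hn1 : 1 ≤ n)
    (hp2 : lam/(n:ℝ) ≤ 1/2) (hk1 : 1 ≤ k) (hkN : k < n*(n-1)/2) :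
    Real.exp ((k:ℝ) * Real.log ((((n*(n-1)/2 : ℕ):ℝ) - k) * (lam/n) / k) + ((k:ℝ) - 1)
        - Real.log k - ((lam/n)/(1 - lam/n))*((n*(n-1)/2:ℕ):ℝ))
      ≤ (Nat.choose (n*(n-1)/2) k : ℝ) * (lam/n)^k * (1 - lam/n)^(n*(n-1)/2 - k) := by
  set N := n*(n-1)/2 with hNdef
  have hn0 : (0:ℝ) < n := by exact_mod_cast hn1
  set p : ℝ := lam/n with hpdef
  have hp0 : 0 < p := by positivity
  have hp1 : p < 1 := by rw [hpdef]; linarith [hp2]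
  have h1p : (0:ℝ) < 1 - p := by linarith
  have hkN' : k ≤ N := le_of_lt hkN
  have hkR : (1:ℝ) ≤ (k:ℝ) := by exact_mod_cast hk1
  have hkR0 : (0:ℝ) < (k:ℝ) := by linarith
  have hkf : (0:ℝ) < (k.factorial : ℝ) := by exact_mod_cast k.factorial_pos
  have hNkpos : (0:ℝ) < (N:ℝ) - k := by
    have : (k:ℝ) < (N:ℝ) := by exact_mod_cast hkN
    linarith
  set E : ℝ := ((N:ℝ) - k) * p / k with hEdef
  have hEpos : 0 < E := by positivity
  have hB1 : ((N:ℝ)-k)^k ≤ (N.choose k : ℝ) * (k.factorial : ℝ) := by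
    have h1 : (N - k)^k ≤ N.descFactorial k := by
      calc (N-k)^k ≤ (N+1-k)^k := by
            apply Nat.pow_le_pow_left
            omega
        _ ≤ N.descFactorial k := Nat.pow_sub_le_descFactorial N k
    have h2 : (N.descFactorial k : ℝ) = (N.choose k : ℝ) * (k.factorial : ℝ) := by
      rw [Nat.descFactorial_eq_factorial_mul_choose]
      push_cast
      ring
    calc ((N:ℝ)-k)^k = ((N - k : ℕ) : ℝ)^k := by rw [Nat.cast_sub hkN']
      _ ≤ (N.descFactorial k : ℝ) := by exact_mod_cast h1
      _ = _ := h2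
  have hB2 : Real.exp ((k:ℝ)-1) * (k.factorial : ℝ) ≤ (k:ℝ)^k * k := by
    have h := aux_factorial_le k hk1
    have he : Real.exp ((k:ℝ)-1) * Real.exp 1 = Real.exp (k:ℝ) := by
      rw [← Real.exp_add]; congr 1; ring
    have hpow : (k:ℝ)^(k+1) = (k:ℝ)^k * k := by rw [pow_succ]
    nlinarith [Real.exp_pos (1:ℝ), Real.exp_pos ((k:ℝ)-1), h, hkf]
  have hD : E^k = Real.exp ((k:ℝ) * Real.log E) := by
    rw [← Real.exp_log hEpos, ← Real.exp_nat_mul, Real.exp_log hEpos]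
  have hN' : Real.exp (-(p/(1-p)))^N = Real.exp ((N:ℝ) * (-(p/(1-p)))) := (Real.exp_nat_mul _ N).symm
  have hexpnegk : Real.exp (-Real.log (k:ℝ)) = (k:ℝ)⁻¹ := by
    rw [Real.exp_neg, Real.exp_log hkR0]
  have heq : Real.exp ((k:ℝ) * Real.log E + ((k:ℝ) - 1) - Real.log k - (p/(1-p))*(N:ℝ))
      = E^k * Real.exp ((k:ℝ)-1) * Real.exp (-Real.log (k:ℝ)) * Real.exp (-(p/(1-p)))^N := by
    rw [hD, hN', ← Real.exp_add, ← Real.exp_add, ← Real.exp_add]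
    congr 1
    ring
  have hB1' : (((N:ℝ)-k)^k * p^k) ≤ ((N.choose k:ℝ) * (k.factorial:ℝ)) * p^k :=
    mul_le_mul_of_nonneg_right hB1 (by positivity)
  have f2 : Real.exp ((k:ℝ)-1) / ((k:ℝ)^k * (k:ℝ)) ≤ 1/(k.factorial:ℝ) := by
    rw [div_le_div_iff₀ (by positivity) hkf]
    linarith [hB2]
  have f3 : Real.exp (-(p/(1-p)))^N ≤ (1-p)^N :=
    pow_le_pow_left₀ (Real.exp_nonneg _) (aux_exp_le_one_sub hp0.le hp1) N
  calc Real.exp ((k:ℝ) * Real.log E + ((k:ℝ) - 1) - Real.log k - (p/(1-p))*(N:ℝ))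
      = ((((N:ℝ)-k)^k * p^k) * (Real.exp ((k:ℝ)-1) / ((k:ℝ)^k * (k:ℝ))))
          * Real.exp (-(p/(1-p)))^N := by
        rw [heq, hexpnegk, hEdef, div_pow, mul_pow]
        ring
    _ ≤ (((N.choose k:ℝ) * (k.factorial:ℝ)) * p^k * (1/(k.factorial:ℝ))) * (1-p)^N := by
        apply mul_le_mul _ f3 (by positivity) _
        · exact mul_le_mul hB1' f2 (by positivity) (by positivity)
        · positivity
    _ = (N.choose k:ℝ) * p^k * (1-p)^N := by
        field_simp
    _ ≤ (N.choose k:ℝ) * p^k * (1-p)^(N-k) := by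
        apply mul_le_mul_of_nonneg_left _ (by positivity)
        exact pow_le_pow_of_le_one h1p.le (by linarith) (Nat.sub_le N k)


lemma tendsto_log_div_nat : Tendsto (fun n : ℕ => Real.log n / n) atTop (𝓝 0) := by
  have h := Real.isLittleO_log_id_atTop.tendsto_div_nhds_zero
  exact h.comp tendsto_natCast_atTop_atTop

lemma tendsto_ceil_div (x' : ℝ) (hx : 0 < x') :
    Tendsto (fun n : ℕ => ((⌈(n:ℝ)*x'/2⌉₊ : ℕ):ℝ)/n) atTop (𝓝 (x'/2)) := by
  apply tendsto_of_tendsto_of_tendsto_of_le_of_le' (tendsto_const_nhds)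
    (by simpa using tendsto_const_nhds.add (tendsto_one_div_atTop_nhds_zero_nat (𝕜 := ℝ)) :
      Tendsto (fun n : ℕ => x'/2 + 1/n) atTop (𝓝 (x'/2)))
  · filter_upwards [eventually_ge_atTop 1] with n hn
    have hn0 : (0:ℝ) < n := by exact_mod_cast hn
    rw [le_div_iff₀ hn0]
    calc x'/2 * n = (n:ℝ)*x'/2 := by ring
      _ ≤ ⌈(n:ℝ)*x'/2⌉₊ := Nat.le_ceil _
  · filter_upwards [eventually_ge_atTop 1] with n hn
    have hn0 : (0:ℝ) < n := by exact_mod_cast hn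
    rw [div_le_iff₀ hn0]
    have h1 : (⌈(n:ℝ)*x'/2⌉₊ : ℝ) < (n:ℝ)*x'/2 + 1 := Nat.ceil_lt_add_one (by positivity)
    calc (⌈(n:ℝ)*x'/2⌉₊ : ℝ) ≤ (n:ℝ)*x'/2 + 1 := h1.le
      _ ≤ (x'/2 + 1/n)*n := by
          have he : (x'/2 + 1/n)*n = (n:ℝ)*x'/2 + 1 := by field_simp
          rw [he]

lemma aux_Ncast' (n : ℕ) (hn : 1 ≤ n) : ((n*(n-1)/2 : ℕ) : ℝ) = (n:ℝ) * ((n:ℝ)-1)/2 := by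
  have h2 : 2 ∣ n*(n-1) := by
    have := Nat.even_mul_succ_self (n-1)
    rw [Nat.sub_add_cancel hn] at this
    exact (by rwa [Nat.mul_comm] : Even (n*(n-1))).two_dvd
  rw [Nat.cast_div h2 (by norm_num : ((2:ℕ):ℝ) ≠ 0)]
  push_cast [Nat.cast_sub hn]
  ring

lemma tendsto_q (lam : ℝ) : Tendsto (fun n : ℕ => ((lam/n)/(1 - lam/n)) * (((n*(n-1)/2:ℕ):ℝ)/n))
    atTop (𝓝 (lam/2)) := by
  have t3 : Tendsto (fun n : ℕ => 1/(n:ℝ)) atTop (𝓝 0) := tendsto_one_div_atTop_nhds_zero_nat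
  have hevlam : ∀ᶠ n : ℕ in atTop, lam < (n:ℝ) :=
    tendsto_natCast_atTop_atTop.eventually_gt_atTop lam
  have h2 : Tendsto (fun n : ℕ => lam * (1 - 1/(n:ℝ))/(2*(1 - lam*(1/n))))
      atTop (𝓝 (lam * (1 - 0)/(2*(1 - lam*0)))) := by
    apply Tendsto.div (tendsto_const_nhds.mul (tendsto_const_nhds.sub t3))
      (tendsto_const_nhds.mul (tendsto_const_nhds.sub (tendsto_const_nhds.mul t3)))
    norm_num
  rw [show lam * (1 - 0)/(2*(1 - lam*0)) = lam/2 by norm_num] at h2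
  apply h2.congr'
  filter_upwards [eventually_ge_atTop 1, hevlam] with n hn hl
  have hn0 : (0:ℝ) < n := by exact_mod_cast hn
  have hd : 1 - lam/(n:ℝ) ≠ 0 := by
    have : lam/(n:ℝ) < 1 := by rw [div_lt_one hn0]; exact hl
    linarith
  have h1 : (n:ℝ) - lam ≠ 0 := sub_ne_zero.mpr (ne_of_gt hl)
  rw [aux_Ncast' n hn]
  field_simp [hd, h1]

lemma lower_tendsto (lam x' : ℝ) (hlam : 0 < lam) (hx : 0 < x') :
    Tendsto (fun n : ℕ =>
      ((⌈(n:ℝ)*x'/2⌉₊:ℝ) * Real.log ((((n*(n-1)/2 : ℕ):ℝ) - (⌈(n:ℝ)*x'/2⌉₊:ℝ)) * (lam/n) / (⌈(n:ℝ)*x'/2⌉₊:ℝ))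
        + ((⌈(n:ℝ)*x'/2⌉₊:ℝ) - 1) - Real.log (⌈(n:ℝ)*x'/2⌉₊:ℝ)
        - ((lam/n)/(1 - lam/n))*((n*(n-1)/2:ℕ):ℝ)) / n)
      atTop (𝓝 ((x'/2) * Real.log (lam/x') + x'/2 - lam/2)) := by
  have hx2 : x'/2 ≠ 0 := by positivity
  have ha : Tendsto (fun n : ℕ => ((⌈(n:ℝ)*x'/2⌉₊ : ℕ):ℝ)/n) atTop (𝓝 (x'/2)) :=
    tendsto_ceil_div x' hx
  have t3 : Tendsto (fun n : ℕ => 1/(n:ℝ)) atTop (𝓝 0) := tendsto_one_div_atTop_nhds_zero_nat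
  have hevk : ∀ᶠ n : ℕ in atTop, 1 ≤ ⌈(n:ℝ)*x'/2⌉₊ := by
    filter_upwards [eventually_ge_atTop 1] with n hn
    rw [Nat.one_le_iff_ne_zero, ← Nat.pos_iff_ne_zero, Nat.ceil_pos]
    have hn0 : (0:ℝ) < n := by exact_mod_cast hn
    positivity
  have hevlam : ∀ᶠ n : ℕ in atTop, lam < (n:ℝ) :=
    tendsto_natCast_atTop_atTop.eventually_gt_atTop lam
  -- E tendsto
  have hE : Tendsto (fun n : ℕ =>
      (((n*(n-1)/2 : ℕ):ℝ) - (⌈(n:ℝ)*x'/2⌉₊:ℝ)) * (lam/n) / (⌈(n:ℝ)*x'/2⌉₊:ℝ))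
      atTop (𝓝 (lam/x')) := by
    have hE2 : Tendsto (fun n : ℕ =>
        lam * ((1 - 1/(n:ℝ))/(2 * (((⌈(n:ℝ)*x'/2⌉₊ : ℕ):ℝ)/n)) - 1/n))
        atTop (𝓝 (lam * ((1 - 0)/(2 * (x'/2)) - 0))) := by
      apply tendsto_const_nhds.mul
      apply Tendsto.sub _ t3
      exact (tendsto_const_nhds.sub t3).div (tendsto_const_nhds.mul ha) (by
        simpa using hx2)
    have heq : lam * ((1 - 0)/(2 * (x'/2)) - 0) = lam/x' := by field_simp; ring
    rw [heq] at hE2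
    apply hE2.congr'
    filter_upwards [eventually_ge_atTop 1, hevk] with n hn hkn
    have hn0 : (0:ℝ) < n := by exact_mod_cast hn
    have hk0 : (0:ℝ) < (⌈(n:ℝ)*x'/2⌉₊ : ℕ) := by exact_mod_cast hkn
    rw [aux_Ncast' n hn]
    field_simp [hn0.ne', hk0.ne']
  have hlogE : Tendsto (fun n : ℕ =>
      Real.log ((((n*(n-1)/2 : ℕ):ℝ) - (⌈(n:ℝ)*x'/2⌉₊:ℝ)) * (lam/n) / (⌈(n:ℝ)*x'/2⌉₊:ℝ)))
      atTop (𝓝 (Real.log (lam/x'))) :=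
    ((Real.continuousAt_log (by positivity)).tendsto).comp hE
  have hlogk : Tendsto (fun n : ℕ => Real.log (⌈(n:ℝ)*x'/2⌉₊:ℝ) / n) atTop (𝓝 0) := by
    have h1 : Tendsto (fun n : ℕ =>
        Real.log (((⌈(n:ℝ)*x'/2⌉₊:ℕ):ℝ)/n) * (1/(n:ℝ)) + Real.log n / n)
        atTop (𝓝 (Real.log (x'/2) * 0 + 0)) := by
      apply Tendsto.add _ tendsto_log_div_nat
      exact (((Real.continuousAt_log hx2).tendsto).comp ha).mul t3
    rw [show Real.log (x'/2) * 0 + 0 = (0:ℝ) by ring] at h1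
    apply h1.congr'
    filter_upwards [eventually_ge_atTop 1, hevk] with n hn hkn
    have hn0 : (0:ℝ) < n := by exact_mod_cast hn
    have hk0 : (0:ℝ) < (⌈(n:ℝ)*x'/2⌉₊ : ℕ) := by exact_mod_cast hkn
    rw [Real.log_div hk0.ne' hn0.ne']
    field_simp
    ring
  have hq := tendsto_q lam
  have htot : Tendsto (fun n : ℕ =>
      (((⌈(n:ℝ)*x'/2⌉₊:ℕ):ℝ)/n) * Real.log ((((n*(n-1)/2 : ℕ):ℝ) - (⌈(n:ℝ)*x'/2⌉₊:ℝ)) * (lam/n) / (⌈(n:ℝ)*x'/2⌉₊:ℝ))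
        + ((((⌈(n:ℝ)*x'/2⌉₊:ℕ):ℝ)/n) - 1/n) - Real.log (⌈(n:ℝ)*x'/2⌉₊:ℝ)/n
        - ((lam/n)/(1 - lam/n)) * (((n*(n-1)/2:ℕ):ℝ)/n))
      atTop (𝓝 ((x'/2) * Real.log (lam/x') + (x'/2 - 0) - 0 - lam/2)) := by
    exact (((ha.mul hlogE).add (ha.sub t3)).sub hlogk).sub hq
  rw [show (x'/2) * Real.log (lam/x') + (x'/2 - 0) - 0 - lam/2
      = (x'/2) * Real.log (lam/x') + x'/2 - lam/2 by ring] at htot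
  apply htot.congr'
  filter_upwards [eventually_ge_atTop 1, hevlam] with n hn hl
  have hn0 : (0:ℝ) < n := by exact_mod_cast hn
  have hd : 1 - lam/(n:ℝ) ≠ 0 := by
    have : lam/(n:ℝ) < 1 := by rw [div_lt_one hn0]; exact hl
    linarith
  have h1 : (n:ℝ) - lam ≠ 0 := sub_ne_zero.mpr (ne_of_gt hl)
  field_simp [hd, h1]



lemma rateJ_eq (lam : ℝ) (hlam : 0 < lam) (x : NNReal) :
    rateJ lam x = (lam - x + ((x:ℝ) * Real.log x - x * Real.log lam)) / 2 := by
  unfold rateJ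
  rcases eq_or_ne x 0 with h | h
  · subst h; simp
  · have hx : (x:ℝ) ≠ 0 := by exact_mod_cast h
    rw [Real.log_div hx hlam.ne']
    ring

lemma rateJ_continuous (lam : ℝ) (hlam : 0 < lam) : Continuous (rateJ lam) := by
  have h : Continuous (fun t : ℝ => (lam - t + (t * Real.log t - t * Real.log lam)) / 2) := by
    apply Continuous.div_const
    apply Continuous.add
    · exact (continuous_const.sub continuous_id)
    · exact (Real.continuous_mul_log.sub (continuous_id.mul continuous_const))
  have : rateJ lam = (fun t : ℝ => (lam - t + (t * Real.log t - t * Real.log lam)) / 2) ∘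
      ((↑) : NNReal → ℝ) := by
    funext x
    exact rateJ_eq lam hlam x
  rw [this]
  exact h.comp NNReal.continuous_coe

lemma rateJ_nonneg (lam : ℝ) (hlam : 0 < lam) (x : NNReal) : 0 ≤ rateJ lam x := by
  unfold rateJ
  rcases eq_or_ne x 0 with h | h
  · subst h; simp; positivity
  · have hx : (0:ℝ) < (x:ℝ) := by
      have := (zero_lt_iff.mpr h)
      exact_mod_cast this
    have hlog : Real.log (lam/(x:ℝ)) ≤ lam/(x:ℝ) - 1 := Real.log_le_sub_one_of_pos (by positivity)
    have hlog2 : 1 - lam/(x:ℝ) ≤ Real.log ((x:ℝ)/lam) := by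
      have : Real.log ((x:ℝ)/lam) = - Real.log (lam/(x:ℝ)) := by
        rw [← Real.log_inv]
        congr 1
        rw [inv_div]
      rw [this]
      linarith
    have hmul : (x:ℝ) * (1 - lam/(x:ℝ)) ≤ (x:ℝ) * Real.log ((x:ℝ)/lam) :=
      mul_le_mul_of_nonneg_left hlog2 hx.le
    have hid : (x:ℝ) * (1 - lam/(x:ℝ)) = (x:ℝ) - lam := by field_simp
    nlinarith [hmul, hid]

lemma rateJ_compact_sublevel (lam : ℝ) (hlam : 0 < lam) (a : ℝ) :
    IsCompact {x : NNReal | rateJ lam x ≤ a} := by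
  set C : NNReal := Real.toNNReal (max (lam * Real.exp 2) (2*|a|)) with hC
  apply IsCompact.of_isClosed_subset (isCompact_Icc (a := 0) (b := C))
  · exact IsClosed.preimage (rateJ_continuous lam hlam) isClosed_Iic
  · intro x hx
    simp only [Set.mem_setOf_eq] at hx
    constructor
    · exact zero_le
    · by_contra hxC
      push_neg at hxC
      have hCx : (C:ℝ) < (x:ℝ) := by exact_mod_cast hxC
      have hCcoe : (C:ℝ) = max (lam * Real.exp 2) (2*|a|) := by
        rw [hC, Real.coe_toNNReal]
        positivity
      rw [hCcoe] at hCx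
      have h1 : lam * Real.exp 2 < (x:ℝ) := lt_of_le_of_lt (le_max_left _ _) hCx
      have h2 : 2*|a| < (x:ℝ) := lt_of_le_of_lt (le_max_right _ _) hCx
      have hx0 : (0:ℝ) < (x:ℝ) := lt_of_le_of_lt (by positivity) h1
      have hlog : (2:ℝ) ≤ Real.log ((x:ℝ)/lam) := by
        rw [Real.le_log_iff_exp_le (by positivity)]
        rw [le_div_iff₀ hlam]
        linarith [h1]
      have hge : (lam + (x:ℝ))/2 ≤ rateJ lam x := by
        unfold rateJ
        have : 2 * (x:ℝ) ≤ (x:ℝ) * Real.log ((x:ℝ)/lam) := by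
          calc 2 * (x:ℝ) = (x:ℝ) * 2 := by ring
            _ ≤ (x:ℝ) * Real.log ((x:ℝ)/lam) := mul_le_mul_of_nonneg_left hlog hx0.le
        linarith
      have : a < rateJ lam x := by
        have habs : a ≤ |a| := le_abs_self a
        nlinarith [hge, hlam, h2, habs]
      linarith [hx, this]






lemma upper_bound (lam : ℝ) (hlam : 0 < lam) (B : Set NNReal) :
    limsup (fun n : ℕ => elog (binomProb lam n B) n) atTop ≤
      -(⨅ x ∈ closure B, (rateJ lam x : EReal)) := by
  rcases Set.eq_empty_or_nonempty B with hB | ⟨x0, hx0⟩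
  · have hzero : ∀ n : ℕ, elog (binomProb lam n B) n = ⊥ := by
      intro n
      have : binomProb lam n B = 0 := by
        unfold binomProb
        apply Finset.sum_eq_zero
        intro k _
        rw [if_neg]
        rw [hB]
        exact Set.notMem_empty _
      rw [this]
      unfold elog
      rw [if_neg (lt_irrefl 0)]
    calc limsup (fun n : ℕ => elog (binomProb lam n B) n) atTop
        = limsup (fun _ : ℕ => (⊥:EReal)) atTop := by
          congr 1; funext n; exact hzero n
      _ = ⊥ := limsup_const ⊥
      _ ≤ _ := bot_le
  · -- B nonempty
    set I : EReal := ⨅ x ∈ B, ((rateJ lam x : ℝ) : EReal) with hIdef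
    have hI0 : (0:EReal) ≤ I := by
      apply le_iInf₂
      intro x _
      exact_mod_cast EReal.coe_nonneg.mpr (rateJ_nonneg lam hlam x)
    have hItop : I ≠ ⊤ := by
      have hle : I ≤ ((rateJ lam x0 : ℝ) : EReal) := iInf₂_le x0 hx0
      intro h
      rw [h] at hle
      exact EReal.coe_ne_top _ (top_le_iff.mp hle)
    have hIbot : I ≠ ⊥ := by
      intro h
      rw [h] at hI0
      simp at hI0
    set m : ℝ := I.toReal with hmdef
    have hmI : ((m:ℝ) : EReal) = I := EReal.coe_toReal hItop hIbot
    have hmle : ∀ y ∈ B, m ≤ rateJ lam y := by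
      intro y hy
      have : I ≤ ((rateJ lam y : ℝ) : EReal) := iInf₂_le y hy
      rw [← hmI] at this
      exact_mod_cast this
    -- eventual bound on binomProb
    have hev : ∀ᶠ n : ℕ in atTop,
        binomProb lam n B ≤ ((n*(n-1)/2 + 1 : ℕ):ℝ) * Real.exp (lam^2 + 2*lam - n * m) := by
      filter_upwards [eventually_ge_atTop 2, tendsto_natCast_atTop_atTop.eventually_ge_atTop lam]
        with n hn2 hnl
      unfold binomProb
      have hbound : ∀ k ∈ Finset.range (n*(n-1)/2 + 1),
          (if ((2 * k : NNReal) / (n : NNReal)) ∈ B then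
            (Nat.choose (n * (n - 1) / 2) k : ℝ) * (lam / n) ^ k *
              (1 - lam / n) ^ (n * (n - 1) / 2 - k) else 0)
          ≤ Real.exp (lam^2 + 2*lam - n * m) := by
        intro k hk
        rw [Finset.mem_range] at hk
        have hkN : k ≤ n*(n-1)/2 := by omega
        split_ifs with hmem
        · calc (Nat.choose (n * (n - 1) / 2) k : ℝ) * (lam / n) ^ k *
                (1 - lam / n) ^ (n * (n - 1) / 2 - k)
              ≤ Real.exp (lam^2 + 2*lam - (n:ℝ) * rateJ lam ((2 * k : NNReal) / (n : NNReal))) :=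
                term_upper lam hlam n k hn2 hnl hkN
            _ ≤ Real.exp (lam^2 + 2*lam - n * m) := by
                apply Real.exp_le_exp.mpr
                have hmem' : ((2 * k : NNReal) / (n : NNReal)) ∈ B := hmem
                have := hmle _ hmem'
                have hn0 : (0:ℝ) ≤ n := by positivity
                nlinarith [this, hn0]
        · positivity
      calc (∑ k ∈ Finset.range (n * (n - 1) / 2 + 1), _) ≤
          (Finset.range (n * (n - 1) / 2 + 1)).card • Real.exp (lam^2 + 2*lam - n * m) :=
            Finset.sum_le_card_nsmul _ _ _ hbound
        _ = ((n*(n-1)/2 + 1 : ℕ):ℝ) * Real.exp (lam^2 + 2*lam - n * m) := by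
            rw [Finset.card_range, nsmul_eq_mul]
    -- the dominating real sequence
    set D : ℕ → ℝ := fun n =>
      (Real.log ((n*(n-1)/2 + 1 : ℕ):ℝ) + (lam^2 + 2*lam)) / n - m with hDdef
    have hDtend : Tendsto D atTop (𝓝 (0 - m)) := by
      apply Tendsto.sub_const
      have hlog1 : Tendsto (fun n : ℕ => Real.log ((n*(n-1)/2 + 1 : ℕ):ℝ) / n) atTop (𝓝 0) := by
        apply tendsto_of_tendsto_of_tendsto_of_le_of_le'
          (tendsto_const_nhds : Tendsto (fun _ : ℕ => (0:ℝ)) atTop (𝓝 0))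
          (by simpa using (tendsto_log_div_nat.const_mul 2) :
            Tendsto (fun n : ℕ => 2 * (Real.log n / n)) atTop (𝓝 0))
        · filter_upwards [eventually_ge_atTop 1] with n hn
          have hn0 : (0:ℝ) < n := by exact_mod_cast hn
          apply div_nonneg _ hn0.le
          apply Real.log_nonneg
          have : (1:ℝ) ≤ ((n*(n-1)/2 + 1 : ℕ):ℝ) := by
            have : 1 ≤ n*(n-1)/2 + 1 := by omega
            exact_mod_cast this
          linarith
        · filter_upwards [eventually_ge_atTop 2] with n hn
          have hn0 : (0:ℝ) < n := by
            have : (2:ℝ) ≤ n := by exact_mod_cast hn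
            linarith
          have hle : ((n*(n-1)/2 + 1 : ℕ):ℝ) ≤ ((n:ℝ))^2 := by
            have h1 : ((n*(n-1)/2 + 1 : ℕ):ℝ) = ((n*(n-1)/2:ℕ):ℝ) + 1 := by push_cast; ring
            rw [h1, aux_Ncast' n (by omega)]
            have : (2:ℝ) ≤ n := by exact_mod_cast hn
            nlinarith
          have hlogle : Real.log ((n*(n-1)/2 + 1 : ℕ):ℝ) ≤ 2 * Real.log n := by
            calc Real.log ((n*(n-1)/2 + 1 : ℕ):ℝ) ≤ Real.log ((n:ℝ)^2) := by
                  apply Real.log_le_log (by positivity) hle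
              _ = 2 * Real.log n := by
                  rw [Real.log_pow]; push_cast; ring
          calc Real.log ((n*(n-1)/2 + 1 : ℕ):ℝ) / n ≤ 2 * Real.log n / n := by
                apply div_le_div_of_nonneg_right hlogle hn0.le
            _ = 2 * (Real.log n / n) := by ring
      have : (fun n : ℕ => (Real.log ((n*(n-1)/2 + 1 : ℕ):ℝ) + (lam^2 + 2*lam)) / n)
          = fun n : ℕ => Real.log ((n*(n-1)/2 + 1 : ℕ):ℝ)/n + (lam^2+2*lam) * (1/n) := by
        funext n
        rcases Nat.eq_zero_or_pos n with h | h
        · subst h; simp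
        · have hn0 : ((n:ℝ)) ≠ 0 := by positivity
          field_simp
      rw [this]
      simpa using hlog1.add ((tendsto_one_div_atTop_nhds_zero_nat).const_mul (lam^2+2*lam))
    have hevD : ∀ᶠ n : ℕ in atTop,
        elog (binomProb lam n B) n ≤ ((D n : ℝ) : EReal) := by
      filter_upwards [hev, eventually_ge_atTop 1] with n hPle hn1
      have hn0 : (0:ℝ) < n := by exact_mod_cast hn1
      unfold elog
      split_ifs with hpos
      · rw [EReal.coe_le_coe_iff]
        have hX : (0:ℝ) < ((n*(n-1)/2 + 1 : ℕ):ℝ) := by positivity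
        have hlogle : Real.log (binomProb lam n B) ≤
            Real.log ((n*(n-1)/2 + 1 : ℕ):ℝ) + (lam^2 + 2*lam - n * m) := by
          calc Real.log (binomProb lam n B)
              ≤ Real.log (((n*(n-1)/2 + 1 : ℕ):ℝ) * Real.exp (lam^2 + 2*lam - n * m)) :=
                Real.log_le_log hpos hPle
            _ = Real.log ((n*(n-1)/2 + 1 : ℕ):ℝ) + (lam^2 + 2*lam - n * m) := by
                rw [Real.log_mul hX.ne' (Real.exp_ne_zero _), Real.log_exp]
        rw [hDdef]
        rw [div_le_iff₀ hn0] at *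
        calc Real.log (binomProb lam n B)
            ≤ Real.log ((n*(n-1)/2 + 1 : ℕ):ℝ) + (lam^2 + 2*lam - n * m) := hlogle
          _ = ((Real.log ((n*(n-1)/2 + 1 : ℕ):ℝ) + (lam^2 + 2*lam)) / n - m) * n := by
              field_simp
              ring
      · exact bot_le
    calc limsup (fun n : ℕ => elog (binomProb lam n B) n) atTop
        ≤ limsup (fun n : ℕ => ((D n : ℝ) : EReal)) atTop := limsup_le_limsup hevD
      _ = ((0 - m : ℝ) : EReal) := (EReal.tendsto_coe.mpr hDtend).limsup_eq
      _ = -((m : ℝ) : EReal) := by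
          rw [zero_sub]
          exact_mod_cast EReal.coe_neg m
      _ = -I := by rw [hmI]
      _ ≤ -(⨅ x ∈ closure B, (rateJ lam x : EReal)) := by
          rw [EReal.neg_le_neg_iff]
          exact biInf_mono fun x hx => subset_closure hx






lemma binom_term_nonneg (lam : ℝ) (n : ℕ) (B : Set NNReal) (hp0 : 0 ≤ lam/(n:ℝ)) (hp1 : lam/(n:ℝ) ≤ 1) :
    ∀ k ∈ Finset.range (n * (n - 1) / 2 + 1),
      (0:ℝ) ≤ if ((2 * k : NNReal) / (n : NNReal)) ∈ B then
        (Nat.choose (n * (n - 1) / 2) k : ℝ) * (lam / n) ^ k *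
          (1 - lam / n) ^ (n * (n - 1) / 2 - k) else 0 := by
  intro k _
  split_ifs with h
  · have h1 : (0:ℝ) ≤ 1 - lam/n := by linarith
    positivity
  · exact le_refl _

lemma claim_lower (lam : ℝ) (hlam : 0 < lam) (B : Set NNReal) (x : NNReal)
    (hx : x ∈ interior B) :
    ((-(rateJ lam x) : ℝ) : EReal) ≤ liminf (fun n : ℕ => elog (binomProb lam n B) n) atTop := by
  suffices h : ∃ L : ℕ → ℝ, Tendsto L atTop (𝓝 (-(rateJ lam x))) ∧
      (∀ᶠ n : ℕ in atTop, ((L n : ℝ) : EReal) ≤ elog (binomProb lam n B) n) by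
    obtain ⟨L, hT, hev⟩ := h
    calc ((-(rateJ lam x) : ℝ) : EReal)
        = liminf (fun n : ℕ => ((L n : ℝ) : EReal)) atTop := ((EReal.tendsto_coe.mpr hT).liminf_eq).symm
      _ ≤ _ := liminf_le_liminf hev
  have hplim : ∀ᶠ n : ℕ in atTop, lam/(n:ℝ) ≤ 1/2 := by
    filter_upwards [tendsto_natCast_atTop_atTop.eventually_ge_atTop (2*lam)] with n hn
    have hn0 : (0:ℝ) < n := by linarith [hlam]
    rw [div_le_iff₀ hn0]
    linarith
  rcases eq_or_ne x 0 with hx0 | hx0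
  · -- x = 0
    subst hx0
    have h0B : (0:NNReal) ∈ B := interior_subset hx
    have hrate0 : rateJ lam 0 = lam/2 := by
      unfold rateJ
      simp
    refine ⟨fun n => (-(((lam/n)/(1 - lam/n)) * ((n*(n-1)/2:ℕ):ℝ))) / n, ?_, ?_⟩
    · -- tendsto
      have hq := tendsto_q lam
      have := hq.neg
      rw [hrate0]
      apply this.congr
      intro n
      ring
    · filter_upwards [hplim, eventually_ge_atTop 1] with n hp2 hn1
      have hn0 : (0:ℝ) < n := by exact_mod_cast hn1
      have hp0 : (0:ℝ) ≤ lam/n := by positivity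
      have hp1 : lam/(n:ℝ) < 1 := by linarith
      have h1p : (0:ℝ) < 1 - lam/n := by linarith
      set N := n*(n-1)/2 with hN
      have hterm : (1 - lam/n)^N ≤ binomProb lam n B := by
        have h0mem : ((2 * (0:ℕ) : NNReal) / (n : NNReal)) ∈ B := by
          norm_num
          exact h0B
        have := Finset.single_le_sum (binom_term_nonneg lam n B hp0 hp1.le)
          (Finset.mem_range.mpr (Nat.succ_pos N))
        rw [if_pos h0mem] at this
        simpa [binomProb] using this
      have hexp : Real.exp (-((lam/n)/(1 - lam/n))) ^ N ≤ (1 - lam/n)^N :=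
        pow_le_pow_left₀ (Real.exp_nonneg _) (aux_exp_le_one_sub hp0 hp1) N
      have hPpos : 0 < binomProb lam n B :=
        lt_of_lt_of_le (by positivity) hterm
      unfold elog
      rw [if_pos hPpos, EReal.coe_le_coe_iff]
      apply div_le_div_of_nonneg_right _ hn0.le
      have hlog1 : Real.log (Real.exp (-((lam/n)/(1 - lam/n))) ^ N) ≤ Real.log (binomProb lam n B) :=
        Real.log_le_log (by positivity) (le_trans hexp hterm)
      rw [Real.log_pow, Real.log_exp] at hlog1
      calc -(((lam/n)/(1 - lam/n)) * ((N:ℕ):ℝ)) = (N:ℝ) * (-((lam/n)/(1 - lam/n))) := by ring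
        _ ≤ Real.log (binomProb lam n B) := hlog1
  · -- x ≠ 0
    set x' : ℝ := (x:ℝ) with hx'def
    have hx' : 0 < x' := by
      rw [hx'def]
      exact_mod_cast zero_lt_iff.mpr hx0
    have ha := tendsto_ceil_div x' hx'
    have hevk : ∀ᶠ n : ℕ in atTop, 1 ≤ ⌈(n:ℝ)*x'/2⌉₊ := by
      filter_upwards [eventually_ge_atTop 1] with n hn
      rw [Nat.one_le_iff_ne_zero, ← Nat.pos_iff_ne_zero, Nat.ceil_pos]
      have hn0 : (0:ℝ) < n := by exact_mod_cast hn
      positivity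
    have hevkN : ∀ᶠ n : ℕ in atTop, ⌈(n:ℝ)*x'/2⌉₊ < n*(n-1)/2 := by
      filter_upwards [tendsto_natCast_atTop_atTop.eventually_ge_atTop (x'+4),
        eventually_ge_atTop 2] with n hn4 hn2
      have hn2R : (2:ℝ) ≤ n := by exact_mod_cast hn2
      rw [← Nat.cast_lt (α := ℝ)]
      have h1 : (⌈(n:ℝ)*x'/2⌉₊ : ℝ) < (n:ℝ)*x'/2 + 1 := Nat.ceil_lt_add_one (by positivity)
      rw [aux_Ncast' n (by omega)]
      nlinarith [h1, hn4, hx']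
    have hymem : ∀ᶠ n : ℕ in atTop,
        ((2 * (⌈(n:ℝ)*x'/2⌉₊ : ℕ) : NNReal) / (n : NNReal)) ∈ B := by
      have hcoe : Tendsto (fun n : ℕ =>
          ((((2 * (⌈(n:ℝ)*x'/2⌉₊ : ℕ) : NNReal) / (n : NNReal)) : NNReal) : ℝ))
          atTop (𝓝 (x:ℝ)) := by
        have h2a : Tendsto (fun n : ℕ => 2*(((⌈(n:ℝ)*x'/2⌉₊ : ℕ):ℝ)/n)) atTop (𝓝 (2*(x'/2))) :=
          ha.const_mul 2
        rw [show 2*(x'/2) = x' by ring] at h2a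
        rw [show ((x:NNReal):ℝ) = x' from rfl]
        apply h2a.congr
        intro n
        rw [aux_coe_x]
        ring
      have hy : Tendsto (fun n : ℕ => ((2 * (⌈(n:ℝ)*x'/2⌉₊ : ℕ) : NNReal) / (n : NNReal)))
          atTop (𝓝 x) := NNReal.tendsto_coe.mp hcoe
      filter_upwards [hy.eventually_mem (isOpen_interior.mem_nhds hx)] with n hn
      exact interior_subset hn
    refine ⟨fun n =>
      ((⌈(n:ℝ)*x'/2⌉₊:ℝ) * Real.log ((((n*(n-1)/2 : ℕ):ℝ) - (⌈(n:ℝ)*x'/2⌉₊:ℝ)) * (lam/n) / (⌈(n:ℝ)*x'/2⌉₊:ℝ))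
        + ((⌈(n:ℝ)*x'/2⌉₊:ℝ) - 1) - Real.log (⌈(n:ℝ)*x'/2⌉₊:ℝ)
        - ((lam/n)/(1 - lam/n))*((n*(n-1)/2:ℕ):ℝ)) / n, ?_, ?_⟩
    · have hT := lower_tendsto lam x' hlam hx'
      have hval : (x'/2) * Real.log (lam/x') + x'/2 - lam/2 = -(rateJ lam x) := by
        have hloginv : Real.log (lam/x') = -Real.log (x'/lam) := by
          rw [← Real.log_inv]
          congr 1
          rw [inv_div]
        unfold rateJ
        rw [hloginv]
        ring
      rwa [hval] at hT
    · filter_upwards [hplim, eventually_ge_atTop 2, hevk, hevkN, hymem] with n hp2 hn2 hk1 hkN hmem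
      have hn1 : 1 ≤ n := by omega
      have hn0 : (0:ℝ) < n := by
        have : (2:ℝ) ≤ n := by exact_mod_cast hn2
        linarith
      have hp0 : (0:ℝ) ≤ lam/n := by positivity
      have hp1 : lam/(n:ℝ) < 1 := by linarith
      set k := ⌈(n:ℝ)*x'/2⌉₊ with hk
      set N := n*(n-1)/2 with hN
      have hterm : (Nat.choose N k : ℝ) * (lam/n)^k * (1 - lam/n)^(N-k)
          ≤ binomProb lam n B := by
        have := Finset.single_le_sum (binom_term_nonneg lam n B hp0 hp1.le)
          (Finset.mem_range.mpr (by omega : k < N + 1))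
        rwa [if_pos hmem] at this
      have hlower := term_lower lam hlam n k hn1 hp2 hk1 hkN
      have hPpos : 0 < binomProb lam n B :=
        lt_of_lt_of_le (lt_of_lt_of_le (Real.exp_pos _) hlower) hterm
      unfold elog
      rw [if_pos hPpos, EReal.coe_le_coe_iff]
      apply div_le_div_of_nonneg_right _ hn0.le
      have := Real.log_le_log (Real.exp_pos _) (le_trans hlower hterm)
      rwa [Real.log_exp] at this


/-- For `λ > 0` and `M(n)` binomial with parameters `n(n−1)/2` and
`λ/n`, the sequence `2M(n)/n` satisfies the LDP on `[0,∞)` (modelled by `ℝ≥0`) with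
speed `n` and good rate function `j(x) = (λ − x + x log(x/λ))/2`: `j` is a good rate
function, and for every Borel set `B ⊆ [0,∞)`,
`−inf_{B°} j ≤ liminf (1/n) log P(2M(n)/n ∈ B)`
and `limsup (1/n) log P(2M(n)/n ∈ B) ≤ −inf_{cl B} j`. -/
theorem stmt_13 (lam : ℝ) (hlam : 0 < lam) :
    LowerSemicontinuous (rateJ lam) ∧
    (∀ x, 0 ≤ rateJ lam x) ∧
    (∀ a : ℝ, IsCompact {x : NNReal | rateJ lam x ≤ a}) ∧
    ∀ B : Set NNReal, MeasurableSet B →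
      (-(⨅ x ∈ interior B, (rateJ lam x : EReal)) ≤
          liminf (fun n : ℕ => elog (binomProb lam n B) n) atTop) ∧
        limsup (fun n : ℕ => elog (binomProb lam n B) n) atTop ≤
          -(⨅ x ∈ closure B, (rateJ lam x : EReal)) := by
  refine ⟨(rateJ_continuous lam hlam).lowerSemicontinuous, rateJ_nonneg lam hlam,
    rateJ_compact_sublevel lam hlam, ?_⟩
  intro B _
  constructor
  · rw [EReal.neg_le]
    apply le_iInf₂
    intro x hx
    have hc := claim_lower lam hlam B x hx
    rw [EReal.coe_neg] at hc
    exact EReal.neg_le.mp hc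
  · exact upper_bound lam hlam B
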